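/- Let N ≥ 2 and l be integers with 1 ≤ l ≤ N. Then Σ_{n=1}^{N-1} sin(n l π/N) / sin(n π/N) equals N − l if l is odd, and equals 0 if l is even. -/

import Mathlib

open Real Finset

lemma cos_sum_aux (N m : ℕ) (hN : 2 ≤ N) (hm1 : 1 ≤ m) (hm2 : m ≤ N - 1) :
    ∑ n ∈ Finset.Icc 1 (N - 1), Real.cos (n * m * Real.pi / N)
      = if Odd m then 0 else -1 := by
  have hNR : (0:ℝ) < N := by positivity
  have hmR : (1:ℝ) ≤ m := by exact_mod_cast hm1
  have hm2' : (m:ℝ) ≤ (N:ℝ) - 1 := by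
    have : ((m:ℝ)) ≤ ((N - 1 : ℕ) : ℝ) := by exact_mod_cast hm2
    rwa [Nat.cast_sub (by omega), Nat.cast_one] at this
  set θ : ℝ := m * Real.pi / N with hθ
  have hs : 0 < Real.sin (θ / 2) := by
    apply Real.sin_pos_of_pos_of_lt_pi
    · have : 0 < θ := by
        apply div_pos (mul_pos (by linarith) Real.pi_pos) hNR
      linarith
    · have : θ / 2 = m * Real.pi / (2 * N) := by ring
      rw [this]
      rw [div_lt_iff₀ (by positivity)]
      nlinarith [Real.pi_pos]
  have h2s : (2 * Real.sin (θ / 2)) ≠ 0 := by positivity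
  have key : ∀ n : ℕ, Real.cos ((n:ℝ) * m * Real.pi / N)
      = (Real.sin ((2 * (n:ℝ) + 1) * θ / 2) - Real.sin ((2 * (n:ℝ) - 1) * θ / 2))
        / (2 * Real.sin (θ / 2)) := by
    intro n
    rw [Real.sin_sub_sin]
    have h1 : ((2 * (n:ℝ) + 1) * θ / 2 - (2 * (n:ℝ) - 1) * θ / 2) / 2 = θ / 2 := by ring
    have h2 : ((2 * (n:ℝ) + 1) * θ / 2 + (2 * (n:ℝ) - 1) * θ / 2) / 2 = (n:ℝ) * m * Real.pi / N := by
      rw [hθ]; ring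
    rw [h1, h2]
    field_simp
  calc ∑ n ∈ Finset.Icc 1 (N - 1), Real.cos (n * m * Real.pi / N)
      = (∑ n ∈ Finset.Icc 1 (N - 1),
          (Real.sin ((2 * (n:ℝ) + 1) * θ / 2) - Real.sin ((2 * (n:ℝ) - 1) * θ / 2)))
          / (2 * Real.sin (θ / 2)) := by
        rw [Finset.sum_div]
        exact Finset.sum_congr rfl fun n _ => key n
    _ = (Real.sin ((2 * ((N:ℝ) - 1) + 1) * θ / 2) - Real.sin ((2 * (0:ℝ) + 1) * θ / 2))
          / (2 * Real.sin (θ / 2)) := by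
        congr 1
        rw [show Finset.Icc 1 (N - 1) = Finset.Ico 1 N by
          rw [← Finset.Ico_add_one_right_eq_Icc]; congr 1; omega]
        rw [Finset.sum_Ico_eq_sum_range]
        have hcast : ∀ i ∈ Finset.range (N - 1),
            Real.sin ((2 * ((1 + i : ℕ) : ℝ) + 1) * θ / 2)
              - Real.sin ((2 * ((1 + i : ℕ) : ℝ) - 1) * θ / 2)
            = (fun k : ℕ => Real.sin ((2 * (k:ℝ) + 1) * θ / 2)) (i + 1)
              - (fun k : ℕ => Real.sin ((2 * (k:ℝ) + 1) * θ / 2)) i := by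
          intro i _
          push_cast
          ring_nf
        rw [Finset.sum_congr rfl hcast, Finset.sum_range_sub
          (fun k : ℕ => Real.sin ((2 * (k:ℝ) + 1) * θ / 2))]
        have : ((N - 1 : ℕ) : ℝ) = (N:ℝ) - 1 := by
          rw [Nat.cast_sub (by omega)]; norm_num
        rw [this]
        norm_num
    _ = if Odd m then 0 else -1 := by
      have harg : (2 * ((N:ℝ) - 1) + 1) * θ / 2 = (m:ℝ) * Real.pi - θ / 2 := by
        rw [hθ]; field_simp; ring
      rw [harg, Real.sin_nat_mul_pi_sub]
      have h01 : (2 * (0:ℝ) + 1) * θ / 2 = θ / 2 := by ring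
      rw [h01]
      rcases Nat.even_or_odd m with he | ho
      · rw [if_neg (by simpa [Nat.not_odd_iff_even] using he), he.neg_one_pow]
        field_simp
        ring
      · rw [if_pos ho, ho.neg_one_pow]
        field_simp
        ring

theorem sine_ratio_sum (N l : ℕ) (hN : 2 ≤ N) (hl1 : 1 ≤ l) (hl2 : l ≤ N) :
    ∑ n ∈ Finset.Icc 1 (N - 1), Real.sin (n * l * Real.pi / N) / Real.sin (n * Real.pi / N)
    = if Odd l then (N : ℝ) - l else 0 := by
  have hNR : (0:ℝ) < N := by positivity
  have hsin : ∀ n ∈ Finset.Icc 1 (N - 1), 0 < Real.sin (n * Real.pi / N) := by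
    intro n hn
    rw [Finset.mem_Icc] at hn
    apply Real.sin_pos_of_pos_of_lt_pi
    · have : (1:ℝ) ≤ n := by exact_mod_cast hn.1
      positivity
    · rw [div_lt_iff₀ hNR]
      have : (n:ℝ) ≤ (N:ℝ) - 1 := by
        have := hn.2
        have : ((n:ℝ)) ≤ ((N - 1 : ℕ) : ℝ) := by exact_mod_cast this
        rwa [Nat.cast_sub (by omega), Nat.cast_one] at this
      nlinarith [Real.pi_pos]
  induction l using Nat.strong_induction_on with
  | _ l ih =>
    match l, hl1 with
    | 1, _ =>
      push_cast
      have : ∀ n ∈ Finset.Icc 1 (N - 1),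
          Real.sin (n * 1 * Real.pi / N) / Real.sin (n * Real.pi / N) = 1 := by
        intro n hn
        rw [mul_one, div_self (ne_of_gt (hsin n hn))]
      rw [Finset.sum_congr rfl this, Finset.sum_const, Nat.card_Icc]
      simp only [nsmul_eq_mul, mul_one]
      rw [if_pos (by decide)]
      push_cast [Nat.sub_add_cancel (by omega : 1 ≤ N)]
      rw [Nat.cast_sub (by omega)]
      norm_num
    | 2, _ =>
      push_cast
      have : ∀ n ∈ Finset.Icc 1 (N - 1),
          Real.sin (n * 2 * Real.pi / N) / Real.sin (n * Real.pi / N)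
            = 2 * Real.cos (n * 1 * Real.pi / N) := by
        intro n hn
        have h2 : (n:ℝ) * 2 * Real.pi / N = 2 * (n * Real.pi / N) := by ring
        rw [h2, Real.sin_two_mul, mul_assoc, mul_comm (Real.sin _) (Real.cos _),
          ← mul_assoc, mul_div_assoc, div_self (ne_of_gt (hsin n hn)), mul_one,
          mul_one]
      have hc1 := cos_sum_aux N 1 hN (le_refl 1) (by omega)
      push_cast at hc1
      rw [Finset.sum_congr rfl this, ← Finset.mul_sum, hc1]
      rw [if_pos (by decide), if_neg (by decide)]
      ring
    | (l + 3), _ =>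
      push_cast
      have hl3 : l + 3 ≤ N := hl2
      have ih1 := ih (l + 1) (by omega) (by omega) (by omega)
      have hc := cos_sum_aux N (l + 2) hN (by omega) (by omega)
      push_cast at ih1 hc
      have step : ∀ n ∈ Finset.Icc 1 (N - 1),
          Real.sin (n * (l + 3) * Real.pi / N) / Real.sin (n * Real.pi / N)
            = Real.sin (n * (l + 1) * Real.pi / N) / Real.sin (n * Real.pi / N)
              + 2 * Real.cos (n * (l + 2) * Real.pi / N) := by
        intro n hn
        have hsn := ne_of_gt (hsin n hn)
        have key : Real.sin ((n:ℝ) * (l + 3) * Real.pi / N)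
            - Real.sin ((n:ℝ) * (l + 1) * Real.pi / N)
            = 2 * Real.sin ((n:ℝ) * Real.pi / N) * Real.cos ((n:ℝ) * (l + 2) * Real.pi / N) := by
          rw [Real.sin_sub_sin]
          congr 2
          · ring
          · ring
        field_simp
        push_cast at key
        ring_nf at key ⊢
        linarith [key]
      rw [Finset.sum_congr rfl step, Finset.sum_add_distrib, ih1, ← Finset.mul_sum, hc]
      rcases Nat.even_or_odd l with he | ho
      · have h1 : Odd (l + 3) := by
          rcases he with ⟨k, hk⟩; exact ⟨k + 1, by omega⟩
        have h2 : Odd (l + 1) := by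
          rcases he with ⟨k, hk⟩; exact ⟨k, by omega⟩
        have h3 : ¬ Odd (l + 2) := by
          rw [Nat.not_odd_iff_even]; rcases he with ⟨k, hk⟩; exact ⟨k + 1, by omega⟩
        rw [if_pos h1, if_pos h2, if_neg h3]
        ring
      · have h1 : ¬ Odd (l + 3) := by
          rw [Nat.not_odd_iff_even]; rcases ho with ⟨k, hk⟩; exact ⟨k + 2, by omega⟩
        have h2 : ¬ Odd (l + 1) := by
          rw [Nat.not_odd_iff_even]; rcases ho with ⟨k, hk⟩; exact ⟨k + 1, by omega⟩
        have h3 : Odd (l + 2) := by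
          rcases ho with ⟨k, hk⟩; exact ⟨k + 1, by omega⟩
        rw [if_neg h1, if_neg h2, if_pos h3]
        ring
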